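/- If a and b are positive integers with 2a⁴ + 2b⁴ a perfect square, then a = b. -/

import Mathlib

lemma nat_pow_of_coprime {a b c : ℕ} (k : ℕ) (h : Nat.Coprime a b) (heq : a * b = c ^ k) :
    ∃ d, a = d ^ k :=
  exists_eq_pow_of_mul_eq_pow (by rw [Nat.isUnit_iff]; exact h) heq

lemma nat_coprime_of_dvd_coprime {a b m n : ℕ} (hm : Nat.gcd a b ∣ m) (hn : Nat.gcd a b ∣ n)
    (h : Nat.Coprime m n) : Nat.Coprime a b :=
  Nat.dvd_one.mp (h ▸ Nat.dvd_gcd hm hn)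

lemma sq_parity (n : ℕ) : n ^ 2 % 2 = n % 2 := by
  rw [Nat.pow_mod]
  rcases (by omega : n % 2 = 0 ∨ n % 2 = 1) with h | h <;> rw [h]

lemma sq_mod_four_even {n : ℕ} (h : n % 2 = 0) : n ^ 2 % 4 = 0 := by
  obtain ⟨k, rfl⟩ : ∃ k, n = 2 * k := ⟨n / 2, by omega⟩
  have : (2 * k) ^ 2 = 4 * k ^ 2 := by ring
  omega

lemma sq_mod_four_odd {n : ℕ} (h : n % 2 = 1) : n ^ 2 % 4 = 1 := by
  obtain ⟨k, rfl⟩ : ∃ k, n = 2 * k + 1 := ⟨n / 2, by omega⟩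
  have : (2 * k + 1) ^ 2 = 4 * (k ^ 2 + k) + 1 := by ring
  omega

/-- Fermat's right triangle theorem variant: x⁴ - y⁴ = z² has no nontrivial solutions. -/
lemma no_pow4_sub (x : ℕ) : ∀ y z : ℕ, 0 < y → 0 < z → y ^ 4 + z ^ 2 = x ^ 4 → False := by
  induction x using Nat.strong_induction_on with
  | _ x IH =>
  intro y z hy hz heq
  have hy4 : 0 < y ^ 4 := pow_pos hy 4
  have hz2 : 0 < z ^ 2 := pow_pos hz 2
  have hx : 0 < x := by
    rcases Nat.eq_zero_or_pos x with h | h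
    · subst h; simp at heq; omega
    · exact h
  by_cases hg1 : Nat.gcd x y = 1
  · -- coprime case
    have hco : Nat.Coprime x y := hg1
    -- x must be odd
    have hx2 : x % 2 = 1 := by
      rcases (by omega : x % 2 = 0 ∨ x % 2 = 1) with h | h
      · exfalso
        have hy2 : y % 2 = 1 := by
          rcases (by omega : y % 2 = 0 ∨ y % 2 = 1) with h' | h'
          · exfalso
            have h2 : (2 : ℕ) ∣ Nat.gcd x y := Nat.dvd_gcd (by omega) (by omega)
            rw [hg1] at h2; omega
          · exact h'
        have e1 : x ^ 4 = (x ^ 2) ^ 2 := by ring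
        have e2 : y ^ 4 = (y ^ 2) ^ 2 := by ring
        have h1 : (x ^ 2) ^ 2 % 4 = 0 := sq_mod_four_even (by rw [sq_parity]; exact h)
        have h2 : (y ^ 2) ^ 2 % 4 = 1 := sq_mod_four_odd (by rw [sq_parity]; exact hy2)
        have h3 : z ^ 2 % 4 = 0 ∨ z ^ 2 % 4 = 1 := by
          rcases (by omega : z % 2 = 0 ∨ z % 2 = 1) with h' | h'
          · exact Or.inl (sq_mod_four_even h')
          · exact Or.inr (sq_mod_four_odd h')
        omega
      · exact h
    have hx2sq : x ^ 2 % 2 = 1 := by rw [sq_parity]; exact hx2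
    rcases (by omega : y % 2 = 1 ∨ y % 2 = 0) with hy2 | hy2
    · -- Case A : y odd, z even
      have hy2sq : y ^ 2 % 2 = 1 := by rw [sq_parity]; exact hy2
      have hyx : y ^ 2 < x ^ 2 := by
        have h1 : y ^ 4 < x ^ 4 := by omega
        have e1 : y ^ 4 = (y ^ 2) ^ 2 := by ring
        have e2 : x ^ 4 = (x ^ 2) ^ 2 := by ring
        rw [e1, e2] at h1
        exact lt_of_pow_lt_pow_left₀ 2 (Nat.zero_le _) h1
      obtain ⟨s, hs, hspos⟩ : ∃ s, x ^ 2 = y ^ 2 + 2 * s ∧ 0 < s :=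
        ⟨(x ^ 2 - y ^ 2) / 2, by omega, by omega⟩
      set t := y ^ 2 + s with htdef
      have hx4 : x ^ 4 = y ^ 4 + 4 * (s * t) := by
        have e : (y ^ 2 + 2 * s) ^ 2 = y ^ 4 + 4 * (s * (y ^ 2 + s)) := by ring
        calc x ^ 4 = (x ^ 2) ^ 2 := by ring
        _ = (y ^ 2 + 2 * s) ^ 2 := by rw [hs]
        _ = y ^ 4 + 4 * (s * t) := by rw [e]
      have hz4 : z ^ 2 = 4 * (s * t) := by omega
      have hzev : z % 2 = 0 := by
        rcases (by omega : z % 2 = 0 ∨ z % 2 = 1) with h' | h'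
        · exact h'
        · have := sq_mod_four_odd h'; omega
      obtain ⟨w, rfl⟩ : ∃ w, z = 2 * w := ⟨z / 2, by omega⟩
      have hst : s * t = w ^ 2 := by
        have e : (2 * w) ^ 2 = 4 * w ^ 2 := by ring
        omega
      have hcost : Nat.Coprime s t := by
        apply nat_coprime_of_dvd_coprime (m := y ^ 2) (n := x ^ 2)
        · have h1 : Nat.gcd s t ∣ t - s := Nat.dvd_sub (Nat.gcd_dvd_right s t) (Nat.gcd_dvd_left s t)
          have e : t - s = y ^ 2 := by omega
          rwa [e] at h1
        · have h1 : Nat.gcd s t ∣ t + s := Nat.dvd_add (Nat.gcd_dvd_right s t) (Nat.gcd_dvd_left s t)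
          have e : t + s = x ^ 2 := by omega
          rwa [e] at h1
        · exact Nat.Coprime.pow _ _ (Nat.coprime_comm.mp hco)
      obtain ⟨al, hal⟩ := nat_pow_of_coprime 2 hcost hst
      obtain ⟨be, hbe⟩ := nat_pow_of_coprime 2 (Nat.coprime_comm.mp hcost)
        (by rw [Nat.mul_comm]; exact hst)
      have halpos : 0 < al := by
        rcases Nat.eq_zero_or_pos al with h' | h'
        · exfalso; subst h'; simp at hal; omega
        · exact h'
      have hxy : 0 < x * y := Nat.mul_pos hx hy
      have hteq : t ^ 2 = s ^ 2 + (x * y) ^ 2 := by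
        have e : (y ^ 2 + s) ^ 2 = s ^ 2 + ((y ^ 2 + 2 * s) * y ^ 2 : ℕ) := by ring
        have e2 : (x * y) ^ 2 = x ^ 2 * y ^ 2 := by ring
        rw [htdef, e, e2, hs]
      have hfinal : al ^ 4 + (x * y) ^ 2 = be ^ 4 := by
        have e1 : al ^ 4 = (al ^ 2) ^ 2 := by ring
        have e2 : be ^ 4 = (be ^ 2) ^ 2 := by ring
        rw [e1, e2, ← hal, ← hbe]; exact hteq.symm
      have hbx : be < x := by
        have h1 : be ^ 2 < x ^ 2 := by omega
        exact lt_of_pow_lt_pow_left₀ 2 (Nat.zero_le _) h1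
      exact IH be hbx al (x * y) halpos hxy hfinal
    · -- Case B : y even, z odd
      have hz2o : z % 2 = 1 := by
        rcases (by omega : z % 2 = 0 ∨ z % 2 = 1) with h' | h'
        · exfalso
          have h1 : (x ^ 2) ^ 2 % 4 = 1 := sq_mod_four_odd hx2sq
          have h2 : (y ^ 2) ^ 2 % 4 = 0 := sq_mod_four_even (by rw [sq_parity]; exact hy2)
          have h3 : z ^ 2 % 4 = 0 := sq_mod_four_even h'
          have e1 : x ^ 4 = (x ^ 2) ^ 2 := by ring
          have e2 : y ^ 4 = (y ^ 2) ^ 2 := by ring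
          omega
        · exact h'
      have hzx : z < x ^ 2 := by
        have h1 : z ^ 2 < (x ^ 2) ^ 2 := by
          have e : (x ^ 2) ^ 2 = x ^ 4 := by ring
          omega
        exact lt_of_pow_lt_pow_left₀ 2 (Nat.zero_le _) h1
      have hcoxz : Nat.Coprime x z := by
        apply nat_coprime_of_dvd_coprime (m := x) (n := y ^ 4)
        · exact Nat.gcd_dvd_left x z
        · have h1 : Nat.gcd x z ∣ x ^ 4 := dvd_pow (Nat.gcd_dvd_left x z) (by norm_num)
          have h2 : Nat.gcd x z ∣ z ^ 2 := dvd_pow (Nat.gcd_dvd_right x z) (by norm_num)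
          have hsub : y ^ 4 = x ^ 4 - z ^ 2 := by omega
          rw [hsub]; exact Nat.dvd_sub h1 h2
        · exact hco.pow_right 4
      obtain ⟨A, hA, hApos⟩ : ∃ A, x ^ 2 = z + 2 * A ∧ 0 < A :=
        ⟨(x ^ 2 - z) / 2, by omega, by omega⟩
      set B := z + A with hBdef
      have h4AB : y ^ 4 = 4 * (A * B) := by
        have e : (z + 2 * A) ^ 2 = z ^ 2 + 4 * (A * (z + A)) := by ring
        have e2 : x ^ 4 = (x ^ 2) ^ 2 := by ring
        rw [e2, hA, e, ← hBdef] at heq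
        omega
      have hBpos : 0 < B := by omega
      have hcoAB : Nat.Coprime A B := by
        apply nat_coprime_of_dvd_coprime (m := x ^ 2) (n := z)
        · have h1 : Nat.gcd A B ∣ B + A := Nat.dvd_add (Nat.gcd_dvd_right A B) (Nat.gcd_dvd_left A B)
          have e : B + A = x ^ 2 := by omega
          rwa [e] at h1
        · have h1 : Nat.gcd A B ∣ B - A := Nat.dvd_sub (Nat.gcd_dvd_right A B) (Nat.gcd_dvd_left A B)
          have e : B - A = z := by omega
          rwa [e] at h1
        · exact hcoxz.pow_left 2
      obtain ⟨k, rfl⟩ : ∃ k, y = 2 * k := ⟨y / 2, by omega⟩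
      have hkpos : 0 < k := by omega
      have hABk : A * B = 4 * k ^ 4 := by
        have e : (2 * k) ^ 4 = 16 * k ^ 4 := by ring
        omega
      -- exactly one of A, B is even; set E = even one, O = odd one
      have hABpar : A % 2 + B % 2 = 1 := by
        rcases (by omega : A % 2 = 0 ∨ A % 2 = 1) with h' | h'
        · rcases (by omega : B % 2 = 0 ∨ B % 2 = 1) with h'' | h''
          · exfalso
            have : (2 : ℕ) ∣ Nat.gcd A B := Nat.dvd_gcd (by omega) (by omega)
            rw [hcoAB] at this; omega
          · omega
        · rcases (by omega : B % 2 = 0 ∨ B % 2 = 1) with h'' | h''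
          · omega
          · exfalso
            -- A, B both odd: but A + B = x ^ 2 odd
            omega
      have main : ∀ E O : ℕ, E % 2 = 0 → O % 2 = 1 → 0 < E → 0 < O → Nat.Coprime E O →
          E * O = 4 * k ^ 4 → E + O = x ^ 2 → False := by
        intro E O hE2 hO2 hEpos hOpos hcoEO hEO hEOx
        obtain ⟨E', rfl⟩ : ∃ E', E = 2 * E' := ⟨E / 2, by omega⟩
        have hE'O : E' * O % 2 = 0 := by
          have e : 2 * E' * O = 2 * (E' * O) := by ring
          omega
        have hE'ev : E' % 2 = 0 := by
          have hm := Nat.mul_mod E' O 2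
          rw [hO2] at hm
          rcases (by omega : E' % 2 = 0 ∨ E' % 2 = 1) with h' | h'
          · exact h'
          · rw [h'] at hm; omega
        obtain ⟨e, rfl⟩ : ∃ e, E' = 2 * e := ⟨E' / 2, by omega⟩
        have heO : e * O = k ^ 4 := by
          have e1 : 2 * (2 * e) * O = 4 * (e * O) := by ring
          omega
        have hcoeO : Nat.Coprime e O :=
          Nat.Coprime.coprime_dvd_left ⟨4, by ring⟩ hcoEO
        obtain ⟨ss, hss⟩ := nat_pow_of_coprime 4 hcoeO heO
        obtain ⟨t, ht⟩ := nat_pow_of_coprime 4 (Nat.coprime_comm.mp hcoeO)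
          (by rw [Nat.mul_comm]; exact heO)
        have hspos : 0 < ss := by
          rcases Nat.eq_zero_or_pos ss with h' | h'
          · exfalso; subst h'; simp at hss; omega
          · exact h'
        have htpos : 0 < t := by
          rcases Nat.eq_zero_or_pos t with h' | h'
          · exfalso; subst h'; simp at ht; omega
          · exact h'
        -- t² is odd
        have ht2odd : t ^ 2 % 2 = 1 := by
          have e1 : t ^ 4 = (t ^ 2) ^ 2 := by ring
          have e2 : (t ^ 2) ^ 2 % 2 = t ^ 2 % 2 := sq_parity _
          rw [ht] at hO2
          omega
        have hx2t : x ^ 2 = t ^ 4 + 4 * ss ^ 4 := by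
          have : (2 : ℕ) * (2 * e) = 4 * ss ^ 4 := by omega
          omega
        -- x > t²
        have hxt2 : t ^ 2 < x := by
          have h1 : (t ^ 2) ^ 2 < x ^ 2 := by
            have e1 : (t ^ 2) ^ 2 = t ^ 4 := by ring
            have h2 : 0 < ss ^ 4 := pow_pos hspos 4
            omega
          exact lt_of_pow_lt_pow_left₀ 2 (Nat.zero_le _) h1
        have hcoxt : Nat.Coprime x t := by
          have hty4 : t ∣ (2 * k) ^ 4 := by
            have h1 : t ∣ t ^ 4 := dvd_pow_self t (by norm_num)
            have h2 : t ^ 4 ∣ k ^ 4 := ⟨e, by rw [← ht, Nat.mul_comm]; exact heO.symm⟩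
            have h3 : k ^ 4 ∣ (2 * k) ^ 4 := pow_dvd_pow_of_dvd ⟨2, by ring⟩ 4
            exact dvd_trans h1 (dvd_trans h2 h3)
          exact Nat.Coprime.coprime_dvd_right hty4 (hco.pow_right 4)
        obtain ⟨U, hU, hUpos⟩ : ∃ U, x = t ^ 2 + 2 * U ∧ 0 < U :=
          ⟨(x - t ^ 2) / 2, by omega, by omega⟩
        set V := t ^ 2 + U with hVdef
        have hUV : U * V = ss ^ 4 := by
          have e1 : (t ^ 2 + 2 * U) ^ 2 = t ^ 4 + 4 * (U * (t ^ 2 + U)) := by ring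
          have e2 : x ^ 2 = t ^ 4 + 4 * (U * V) := by
            calc x ^ 2 = (t ^ 2 + 2 * U) ^ 2 := by rw [hU]
            _ = t ^ 4 + 4 * (U * (t ^ 2 + U)) := e1
            _ = t ^ 4 + 4 * (U * V) := by rw [← hVdef]
          omega
        have hcoUV : Nat.Coprime U V := by
          apply nat_coprime_of_dvd_coprime (m := x) (n := t ^ 2)
          · have h1 : Nat.gcd U V ∣ V + U := Nat.dvd_add (Nat.gcd_dvd_right U V) (Nat.gcd_dvd_left U V)
            have e : V + U = x := by omega
            rwa [e] at h1
          · have h1 : Nat.gcd U V ∣ V - U := Nat.dvd_sub (Nat.gcd_dvd_right U V) (Nat.gcd_dvd_left U V)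
            rcases (by omega : V - U = t ^ 2 ∨ U - V = t ^ 2 ∧ V ≤ U) with h' | h'
            · rwa [h'] at h1
            · -- V = t^2 + U ≥ U, and t > 0, so V > U unless t = 0
              exfalso
              have : 0 < t ^ 2 := pow_pos htpos 2
              omega
          · exact hcoxt.pow_right 2
        obtain ⟨u, hu⟩ := nat_pow_of_coprime 4 hcoUV hUV
        obtain ⟨v, hv⟩ := nat_pow_of_coprime 4 (Nat.coprime_comm.mp hcoUV)
          (by rw [Nat.mul_comm]; exact hUV)
        have hupos : 0 < u := by
          rcases Nat.eq_zero_or_pos u with h' | h'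
          · exfalso; subst h'; simp at hu; omega
          · exact h'
        have ht2pos : 0 < t := htpos
        have hfin : u ^ 4 + t ^ 2 = v ^ 4 := by omega
        have hvx : v < x := by
          have h1 : v ≤ v ^ 4 := Nat.le_self_pow (by norm_num) v
          have h2 : v ^ 4 < x := by omega
          omega
        exact IH v hvx u t hupos htpos hfin
      rcases (by omega : A % 2 = 0 ∨ B % 2 = 0) with h' | h'
      · exact main A B h' (by omega) hApos hBpos hcoAB hABk (by omega)
      · exact main B A h' (by omega) hBpos hApos (Nat.coprime_comm.mp hcoAB)
          (by rw [Nat.mul_comm]; exact hABk) (by omega)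
  · -- gcd reduction
    have hgpos : 0 < Nat.gcd x y := Nat.gcd_pos_of_pos_left _ hx
    obtain ⟨x', hx'⟩ := Nat.gcd_dvd_left x y
    obtain ⟨y', hy'⟩ := Nat.gcd_dvd_right x y
    set g := Nat.gcd x y with hgdef
    have hdz : (g ^ 2) ^ 2 ∣ z ^ 2 := by
      have h1 : g ^ 4 ∣ x ^ 4 := pow_dvd_pow_of_dvd (Nat.gcd_dvd_left x y) 4
      have h2 : g ^ 4 ∣ y ^ 4 := pow_dvd_pow_of_dvd (Nat.gcd_dvd_right x y) 4
      have hsub : z ^ 2 = x ^ 4 - y ^ 4 := by omega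
      have : g ^ 4 ∣ z ^ 2 := by rw [hsub]; exact Nat.dvd_sub h1 h2
      have e : (g ^ 2) ^ 2 = g ^ 4 := by ring
      rwa [e]
    have hdz' : g ^ 2 ∣ z := (Nat.pow_dvd_pow_iff (by norm_num)).mp hdz
    obtain ⟨z', hz'⟩ := hdz'
    have hx'pos : 0 < x' := by
      rcases Nat.eq_zero_or_pos x' with h | h
      · subst h; simp at hx'; omega
      · exact h
    have hy'pos : 0 < y' := by
      rcases Nat.eq_zero_or_pos y' with h | h
      · subst h; simp at hy'; omega
      · exact h
    have hz'pos : 0 < z' := by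
      rcases Nat.eq_zero_or_pos z' with h | h
      · subst h; simp at hz'; omega
      · exact h
    have hg2 : 1 < g := by omega
    have hlt : x' < x := by
      rw [hx']; exact (Nat.lt_mul_iff_one_lt_left hx'pos).mpr hg2
    have e1 : (g * y') ^ 4 = g ^ 4 * y' ^ 4 := by ring
    have e2 : (g ^ 2 * z') ^ 2 = g ^ 4 * z' ^ 2 := by ring
    have e3 : (g * x') ^ 4 = g ^ 4 * x' ^ 4 := by ring
    rw [hx', hy', hz', e1, e2, e3] at heq
    have heq' : y' ^ 4 + z' ^ 2 = x' ^ 4 := by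
      have h4 : 0 < g ^ 4 := pow_pos hgpos 4
      apply Nat.eq_of_mul_eq_mul_left h4
      rw [Nat.mul_add]; exact heq
    exact IH x' hlt y' z' hy'pos hz'pos heq'

lemma key_lemma (a b d : ℕ) (ha : 0 < a) (hb : 0 < b) (hlt : b < a)
    (h : a ^ 4 + b ^ 4 = 2 * d ^ 2) : False := by
  have hba : b ^ 4 < a ^ 4 := Nat.pow_lt_pow_left hlt (by norm_num)
  obtain ⟨e, he, hepos⟩ : ∃ e, a ^ 4 = b ^ 4 + 2 * e ∧ 0 < e :=
    ⟨(a ^ 4 - b ^ 4) / 2, by omega, by omega⟩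
  have hd2 : d ^ 2 = b ^ 4 + e := by omega
  have hid : (a * b) ^ 4 + e ^ 2 = d ^ 4 := by
    have e1 : d ^ 4 = (d ^ 2) ^ 2 := by ring
    rw [e1, hd2]
    have e2 : (b ^ 4 + e) ^ 2 = b ^ 4 * b ^ 4 + 2 * e * b ^ 4 + e ^ 2 := by ring
    have e3 : (a * b) ^ 4 = a ^ 4 * b ^ 4 := by ring
    rw [e2, e3, he]
    ring
  exact no_pow4_sub d (a * b) e (Nat.mul_pos ha hb) hepos hid

theorem stmt_13 (a b : ℕ) (ha : 0 < a) (hb : 0 < b)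
    (hsq : IsSquare (2 * a ^ 4 + 2 * b ^ 4)) : a = b := by
  obtain ⟨c, hc⟩ := hsq
  have hc2 : c % 2 = 0 := by
    rcases (by omega : c % 2 = 0 ∨ c % 2 = 1) with h' | h'
    · exact h'
    · exfalso
      obtain ⟨m, rfl⟩ : ∃ m, c = 2 * m + 1 := ⟨c / 2, by omega⟩
      have e : (2 * m + 1) * (2 * m + 1) = 4 * (m * m + m) + 1 := by ring
      omega
  obtain ⟨d, rfl⟩ : ∃ d, c = 2 * d := ⟨c / 2, by omega⟩
  have h : a ^ 4 + b ^ 4 = 2 * d ^ 2 := by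
    have e : (2 * d) * (2 * d) = 4 * d ^ 2 := by ring
    omega
  rcases lt_trichotomy a b with h' | h' | h'
  · exact absurd (key_lemma b a d hb ha h' (by omega)) (by simp)
  · exact h'
  · exact absurd (key_lemma a b d ha hb h' h) (by simp)
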